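/- arXiv:math/9910100 — 6 statements merged into one kernel-verified Lean document; each statement's English description precedes it below -/
import Mathlib

section
/- For constants a > 0, b ∈ ℝ, and C := (a² + 1/a² + b²)/2, the function f(t) := √((a² − C)·cos(2t) + a·b·sin(2t) + C) is well-defined (the expression under the square root is positive for all t ∈ ℝ), and satisfies f''(t) + f(t) = 1/f(t)³ for all t, with f(0) = a and f'(0) = b. -/
open Real

/-- Explicit solution of f'' + f = 1/f³ with f(0)=a, f'(0)=b (case λ = λ̃ = 1). -/
theorem stmt_1 (a b : ℝ) (ha : 0 < a) (C : ℝ) (hC : C = (a ^ 2 + 1 / a ^ 2 + b ^ 2) / 2)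
    (f : ℝ → ℝ)
    (hf : ∀ t, f t = Real.sqrt ((a ^ 2 - C) * Real.cos (2 * t) + a * b * Real.sin (2 * t) + C)) :
    (∀ t : ℝ, 0 < (a ^ 2 - C) * Real.cos (2 * t) + a * b * Real.sin (2 * t) + C) ∧
    (∀ t : ℝ, deriv (deriv f) t + f t = 1 / f t ^ 3) ∧
    f 0 = a ∧ deriv f 0 = b := by
  have ha' : a ≠ 0 := ne_of_gt ha
  have hC2 : 2 * C * a ^ 2 = a ^ 4 + 1 + a ^ 2 * b ^ 2 := by
    rw [hC]; field_simp
  have hCge : 1 ≤ C := by nlinarith [sq_nonneg (a^2 - 1), sq_nonneg (a*b), mul_pos ha ha]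
  have hpq : (a^2 - C)^2 + (a*b)^2 = C^2 - 1 := by nlinarith []
  have hpos : ∀ t, 0 < (a ^ 2 - C) * Real.cos (2 * t) + a * b * Real.sin (2 * t) + C := by
    intro t
    have h1 := Real.sin_sq_add_cos_sq (2*t)
    nlinarith [sq_nonneg ((a^2-C)*Real.sin (2*t) - a*b*Real.cos (2*t)),
      sq_nonneg ((a^2-C)*Real.cos (2*t) + a*b*Real.sin (2*t) + C), hCge]
  refine ⟨hpos, ?_⟩
  set p := a^2 - C with hp
  set q := a * b with hq
  set g : ℝ → ℝ := fun t => p * Real.cos (2 * t) + q * Real.sin (2 * t) + C with hgdef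
  set G : ℝ → ℝ := fun t => (-p * Real.sin (2*t) + q * Real.cos (2*t)) * 2 with hGdef
  have hposg : ∀ t, 0 < g t := hpos
  have hg : ∀ t, HasDerivAt g (G t) t := by
    intro t
    have h2 : HasDerivAt (fun t : ℝ => 2*t) 2 t := by
      simpa using (hasDerivAt_id t).const_mul 2
    have hcos := (Real.hasDerivAt_cos (2*t)).comp t h2
    have hsin := (Real.hasDerivAt_sin (2*t)).comp t h2
    have := ((hcos.const_mul p).add (hsin.const_mul q)).add_const C
    refine this.congr_deriv ?_
    simp [hGdef]; ring
  have hfe : f = fun t => Real.sqrt (g t) := funext hf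
  have hf' : ∀ t, HasDerivAt f (G t / (2 * Real.sqrt (g t))) t := by
    intro t
    rw [hfe]
    exact (hg t).sqrt (ne_of_gt (hposg t))
  have hdf : deriv f = fun t => G t / (2 * Real.sqrt (g t)) := funext fun t => (hf' t).deriv
  have hG' : ∀ t, HasDerivAt G ((-p * Real.cos (2*t) - q * Real.sin (2*t)) * 2 * 2) t := by
    intro t
    have h2 : HasDerivAt (fun t : ℝ => 2*t) 2 t := by
      simpa using (hasDerivAt_id t).const_mul 2
    have hcos := (Real.hasDerivAt_cos (2*t)).comp t h2
    have hsin := (Real.hasDerivAt_sin (2*t)).comp t h2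
    have := ((hsin.const_mul (-p)).add (hcos.const_mul q)).mul_const 2
    refine this.congr_deriv ?_
    ring
  have hD : ∀ t, HasDerivAt (fun t => 2 * Real.sqrt (g t)) (G t / Real.sqrt (g t)) t := by
    intro t
    have := ((hg t).sqrt (ne_of_gt (hposg t))).const_mul 2
    refine this.congr_deriv ?_
    have hs : Real.sqrt (g t) ≠ 0 := ne_of_gt (Real.sqrt_pos.mpr (hposg t))
    field_simp
  have hddf : ∀ t, deriv (deriv f) t =
      ((-p * Real.cos (2*t) - q * Real.sin (2*t)) * 2 * 2 * (2 * Real.sqrt (g t))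
        - G t * (G t / Real.sqrt (g t))) / (2 * Real.sqrt (g t)) ^ 2 := by
    intro t
    rw [hdf]
    have hDne : 2 * Real.sqrt (g t) ≠ 0 :=
      mul_ne_zero two_ne_zero (ne_of_gt (Real.sqrt_pos.mpr (hposg t)))
    exact (((hG' t).div (hD t) hDne)).deriv
  refine ⟨?_, ?_, ?_⟩
  · intro t
    have hgt := hposg t
    have h1 := Real.sin_sq_add_cos_sq (2*t)
    have hkey : 2 * g t * ((-p * Real.cos (2*t) - q * Real.sin (2*t)) * 2 * 2)
        - (G t)^2 + 4 * (g t)^2 = 4 := by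
      simp only [hgdef, hGdef]
      linear_combination (-4*(p^2+q^2))*h1 + (-4)*hpq
    rw [hddf t]
    simp only [hfe]
    set st := Real.sqrt (g t) with hst
    have hstpos : 0 < st := Real.sqrt_pos.mpr hgt
    have hstne : st ≠ 0 := ne_of_gt hstpos
    have hst2 : st ^ 2 = g t := Real.sq_sqrt hgt.le
    rw [← hst2] at hkey
    set A := (-p * Real.cos (2*t) - q * Real.sin (2*t)) * 2 * 2 with hA
    set B := G t with hB
    field_simp
    linear_combination hkey
  · rw [hf]
    norm_num
    rw [show p + C = a^2 by rw [hp]; ring]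
    exact Real.sqrt_sq ha.le
  · rw [hdf]
    have hg0 : g 0 = a ^ 2 := by simp [hgdef, hp]
    simp only [hg0]
    rw [Real.sqrt_sq ha.le]
    simp only [hGdef, hq]
    norm_num
    field_simp
end

section
/- Let a > 0, b ∈ ℝ, C := (a² + 1/a² + b²)/2, and f(t) := √((a² − C)·cos(2t) + a·b·sin(2t) + C). Then for every r ∈ ℝ, ∫_{r}^{r+π} 1/f(t)² dt = π. -/
open Real MeasureTheory

lemma arctan_add_eq_aux (u v : ℝ) (h : 0 < u + v) :
    arctan u + arctan v = π/2 + arctan ((u*v - 1)/(u+v)) := by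
  set s := arctan u + arctan v - π/2 with hs
  have h1 := Real.neg_pi_div_two_lt_arctan u
  have h2 := Real.arctan_lt_pi_div_two u
  have h3 := Real.neg_pi_div_two_lt_arctan v
  have h4 := Real.arctan_lt_pi_div_two v
  have hpos : 0 < arctan u + arctan v := by
    have : arctan (-v) < arctan u := Real.arctan_strictMono (by linarith)
    rw [Real.arctan_neg] at this; linarith
  have hq : (0:ℝ) < Real.sqrt (1 + u^2) := Real.sqrt_pos.2 (by positivity)
  have hr : (0:ℝ) < Real.sqrt (1 + v^2) := Real.sqrt_pos.2 (by positivity)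
  have htan : Real.tan s = (u*v - 1)/(u+v) := by
    rw [Real.tan_eq_sin_div_cos, hs, Real.sin_sub, Real.cos_sub,
      Real.sin_pi_div_two, Real.cos_pi_div_two, Real.sin_add, Real.cos_add,
      Real.sin_arctan, Real.cos_arctan, Real.sin_arctan, Real.cos_arctan]
    rw [div_eq_div_iff]
    · field_simp
      try ring
    · field_simp
      exact div_ne_zero (by simpa using h.ne') (by positivity)
    · exact ne_of_gt h
  have : arctan ((u*v-1)/(u+v)) = s := by
    rw [← htan]; exact Real.arctan_tan (by simp only [hs]; linarith) (by simp only [hs]; linarith)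
  linarith [this]

set_option maxHeartbeats 1000000 in
/-- For the λ = λ̃ = 1 solution, the integral of 1/f² over any interval of length π is π. -/
theorem stmt_2 (a b : ℝ) (ha : 0 < a) (C : ℝ) (hC : C = (a ^ 2 + 1 / a ^ 2 + b ^ 2) / 2)
    (f : ℝ → ℝ)
    (hf : ∀ t, f t = Real.sqrt ((a ^ 2 - C) * Real.cos (2 * t) + a * b * Real.sin (2 * t) + C)) :
    ∀ r : ℝ, ∫ t in r..(r + π), 1 / f t ^ 2 = π := by
  intro r
  have ha0 : a ≠ 0 := ne_of_gt ha
  set A := a ^ 2 - C with hA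
  set B := a * b with hB
  have hkey : B ^ 2 = C ^ 2 - A ^ 2 - 1 := by
    rw [hB, hA, hC]; field_simp; ring
  have hC1 : 1 ≤ C := by
    rw [hC]
    have ha2 : (0:ℝ) < a ^ 2 := by positivity
    have h2 : 2 ≤ a ^ 2 + 1 / a ^ 2 := by
      rw [show a ^ 2 + 1 / a ^ 2 = (a^4 + 1) / a^2 by field_simp, le_div_iff₀ ha2]
      nlinarith [sq_nonneg (a^2 - 1)]
    nlinarith [sq_nonneg b]
  have hCA1 : 0 < C - A := by nlinarith [sq_nonneg B, sq_nonneg (C + A)]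
  have hCA2 : 0 < C + A := by nlinarith [sq_nonneg B, sq_nonneg (C - A)]
  set D : ℝ → ℝ := fun t => A * Real.cos (2 * t) + B * Real.sin (2 * t) + C with hD
  have hDalt : ∀ t, D t = (C - A) * Real.sin t ^ 2 + 2 * B * Real.sin t * Real.cos t
      + (C + A) * Real.cos t ^ 2 := by
    intro t
    simp only [hD]
    rw [Real.cos_two_mul, Real.sin_two_mul]
    linear_combination (A - C) * (Real.sin_sq_add_cos_sq t)
  have hDpos : ∀ t, 0 < D t := by
    intro t
    have h1 : (C - A) * D t = ((C - A) * Real.sin t + B * Real.cos t) ^ 2 + Real.cos t ^ 2 := by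
      rw [hDalt]
      linear_combination (-(Real.cos t ^ 2)) * hkey
    have h2 : 0 < ((C - A) * Real.sin t + B * Real.cos t) ^ 2 + Real.cos t ^ 2 := by
      rcases eq_or_ne (Real.cos t) 0 with h | h
      · have hsin : Real.sin t ^ 2 = 1 := by
          have := Real.sin_sq_add_cos_sq t; rw [h] at this; nlinarith
        rw [h]
        nlinarith [mul_pos hCA1 hCA1]
      · positivity
    nlinarith [h1, h2, hCA1]
  have hfD : ∀ t, f t ^ 2 = D t := by
    intro t; rw [hf]; exact Real.sq_sqrt (hDpos t).le
  have hDcont : Continuous D := by fun_prop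
  have hcont : Continuous fun t => 1 / D t :=
    continuous_const.div hDcont fun t => (hDpos t).ne'
  have hint : ∀ u v : ℝ, IntervalIntegrable (fun t => 1 / D t) volume u v := fun u v =>
    hcont.intervalIntegrable u v
  have hrw : ∫ t in r..(r + π), 1 / f t ^ 2 = ∫ t in r..(r + π), 1 / D t := by
    apply intervalIntegral.integral_congr
    intro t _
    show 1 / f t ^ 2 = 1 / D t
    rw [hfD]
  rw [hrw]
  have hper : Function.Periodic (fun t => 1 / D t) π := by
    intro t
    simp only [hD]
    rw [show 2 * (t + π) = 2 * t + 2 * π by ring, Real.cos_add_two_pi, Real.sin_add_two_pi]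
  rw [hper.intervalIntegral_add_eq r 0, zero_add]
  have hpi := Real.pi_pos
  have hC0 : C ≠ 0 := by linarith
  -- derivative lemmas
  have hderiv1 : ∀ s : ℝ, Real.cos s ≠ 0 →
      HasDerivAt (fun t => Real.arctan ((C - A) * Real.tan t + B)) (1 / D s) s := by
    intro s hcos
    have inner : HasDerivAt (fun t => (C - A) * Real.tan t + B)
        ((C - A) * (1 / Real.cos s ^ 2)) s :=
      ((Real.hasDerivAt_tan hcos).const_mul (C - A)).add_const B
    have comp := inner.arctan
    convert comp using 1
    have hE : (1 + ((C - A) * Real.tan s + B) ^ 2) * Real.cos s ^ 2 = (C - A) * D s := by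
      rw [Real.tan_eq_sin_div_cos, hDalt]
      field_simp
      linear_combination (Real.cos s ^ 2) * hkey
    have h1x : (0:ℝ) < 1 + ((C - A) * Real.tan s + B) ^ 2 := by positivity
    have hD' := (hDpos s).ne'
    field_simp
    linear_combination hE
  have hderiv2 : ∀ s : ℝ, Real.sin s ≠ 0 →
      HasDerivAt (fun t => -Real.arctan ((C + A) * (Real.cos t / Real.sin t) + B)) (1 / D s) s := by
    intro s hsin
    have hcot : HasDerivAt (fun t => Real.cos t / Real.sin t)
        ((-Real.sin s * Real.sin s - Real.cos s * Real.cos s) / Real.sin s ^ 2) s :=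
      (Real.hasDerivAt_cos s).div (Real.hasDerivAt_sin s) hsin
    have inner : HasDerivAt (fun t => (C + A) * (Real.cos t / Real.sin t) + B)
        ((C + A) * ((-Real.sin s * Real.sin s - Real.cos s * Real.cos s) / Real.sin s ^ 2)) s :=
      (hcot.const_mul (C + A)).add_const B
    have comp := inner.arctan.neg
    convert comp using 1
    · rfl
    · rfl
    · rfl
    rw [show -Real.sin s * Real.sin s - Real.cos s * Real.cos s = -1 by
      linear_combination -(Real.sin_sq_add_cos_sq s)]
    have hDne : (C - A) * Real.sin s ^ 2 + 2 * B * Real.sin s * Real.cos s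
        + (C + A) * Real.cos s ^ 2 ≠ 0 := by
      rw [← hDalt]; exact (hDpos s).ne'
    rw [hDalt s]
    rw [div_eq_iff hDne, eq_comm]
    field_simp
    linear_combination (-(Real.sin s ^ 2)) * hkey
  -- split the integral
  have hsplit : ∫ t in (0:ℝ)..π, 1 / D t =
      (∫ t in (0:ℝ)..(π/4), 1 / D t) + (∫ t in (π/4)..(3*π/4), 1 / D t)
        + (∫ t in (3*π/4)..π, 1 / D t) := by
    rw [intervalIntegral.integral_add_adjacent_intervals (hint _ _) (hint _ _),
      intervalIntegral.integral_add_adjacent_intervals (hint _ _) (hint _ _)]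
  -- evaluate the three pieces
  have e34c : Real.cos (3*π/4) = -(Real.sqrt 2 / 2) := by
    rw [show 3*π/4 = π - π/4 by ring, Real.cos_pi_sub, Real.cos_pi_div_four]
  have e34s : Real.sin (3*π/4) = Real.sqrt 2 / 2 := by
    rw [show 3*π/4 = π - π/4 by ring, Real.sin_pi_sub, Real.sin_pi_div_four]
  have hsqrt2 : Real.sqrt 2 / 2 ≠ 0 := by positivity
  have I1 : ∫ t in (0:ℝ)..(π/4), 1 / D t = arctan (C - A + B) - arctan B := by
    rw [intervalIntegral.integral_eq_sub_of_hasDerivAt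
      (f := fun t => Real.arctan ((C - A) * Real.tan t + B)) ?_ (hint _ _)]
    · rw [Real.tan_pi_div_four, Real.tan_zero]
      norm_num
    · intro x hx
      rw [Set.uIcc_of_le (by linarith)] at hx
      exact hderiv1 x (ne_of_gt (Real.cos_pos_of_mem_Ioo
        ⟨by linarith [hx.1], by linarith [hx.2]⟩))
  have I2 : ∫ t in (π/4)..(3*π/4), 1 / D t =
      arctan (C + A - B) + arctan (C + A + B) := by
    rw [intervalIntegral.integral_eq_sub_of_hasDerivAt
      (f := fun t => -Real.arctan ((C + A) * (Real.cos t / Real.sin t) + B)) ?_ (hint _ _)]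
    · rw [e34c, e34s, Real.cos_pi_div_four, Real.sin_pi_div_four,
        neg_div, div_self hsqrt2]
      rw [show (C + A) * -1 + B = -(C + A - B) by ring, Real.arctan_neg]
      ring
    · intro x hx
      rw [Set.uIcc_of_le (by linarith)] at hx
      exact hderiv2 x (ne_of_gt (Real.sin_pos_of_pos_of_lt_pi
        (by linarith [hx.1]) (by linarith [hx.2])))
  have I3 : ∫ t in (3*π/4)..π, 1 / D t = arctan B + arctan (C - A - B) := by
    rw [intervalIntegral.integral_eq_sub_of_hasDerivAt
      (f := fun t => Real.arctan ((C - A) * Real.tan t + B)) ?_ (hint _ _)]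
    · rw [Real.tan_pi]
      rw [show Real.tan (3*π/4) = -1 by
        rw [Real.tan_eq_sin_div_cos, e34c, e34s, div_neg, div_self hsqrt2]]
      rw [show (C - A) * -1 + B = -(C - A - B) by ring, Real.arctan_neg]
      norm_num
    · intro x hx
      rw [Set.uIcc_of_le (by linarith)] at hx
      exact hderiv1 x (ne_of_lt (Real.cos_neg_of_pi_div_two_lt_of_lt
        (by linarith [hx.1]) (by linarith [hx.2])))
  -- combine via the arctan addition lemma
  have L1 : arctan (C - A + B) + arctan (C + A - B) = π/2 + arctan (A*B/C) := by
    rw [arctan_add_eq_aux _ _ (by linarith)]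
    congr 2
    rw [show (C - A + B) * (C + A - B) - 1 = 2 * (A*B) by linear_combination -hkey,
      show (C - A + B) + (C + A - B) = 2 * C by ring,
      mul_div_mul_left _ _ (two_ne_zero)]
  have L2 : arctan (C + A + B) + arctan (C - A - B) = π/2 + arctan (-(A*B)/C) := by
    rw [arctan_add_eq_aux _ _ (by linarith)]
    congr 2
    rw [show (C + A + B) * (C - A - B) - 1 = 2 * (-(A*B)) by linear_combination -hkey,
      show (C + A + B) + (C - A - B) = 2 * C by ring,
      mul_div_mul_left _ _ (two_ne_zero)]
  have L2' : arctan (-(A*B)/C) = -arctan (A*B/C) := by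
    rw [neg_div, Real.arctan_neg]
  rw [hsplit, I1, I2, I3]
  rw [L2'] at L2
  linarith [L1, L2]
end

section
/- For constants a > 0, b ∈ ℝ, and λ̃ ∈ ℝ, the function f(t) := √((a + b t)² + λ̃ (t/a)²), defined on the maximal interval around 0 where the radicand is positive, satisfies f''(t) = λ̃ / f(t)³, f(0) = a, and f'(0) = b. -/
open Real

/-- Explicit solution of f'' = λ̃/f³ with f(0)=a, f'(0)=b (Ricci-flat case λ = 0):
the ODE holds at every point where the radicand is positive. -/
theorem stmt_6 (a b lamt : ℝ) (ha : 0 < a) (f : ℝ → ℝ)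
    (hf : ∀ t, f t = Real.sqrt ((a + b * t) ^ 2 + lamt * (t / a) ^ 2)) :
    (0 < (a + b * 0) ^ 2 + lamt * (0 / a) ^ 2) ∧
    (∀ t : ℝ, 0 < (a + b * t) ^ 2 + lamt * (t / a) ^ 2 →
      deriv (deriv f) t = lamt / f t ^ 3) ∧
    f 0 = a ∧ deriv f 0 = b := by
  have ha' : a ≠ 0 := ha.ne'
  set q : ℝ → ℝ := fun t => (a + b * t) ^ 2 + lamt * (t / a) ^ 2 with hq
  have hfe : f = fun t => Real.sqrt (q t) := funext hf
  -- derivative of q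
  have hqd : ∀ t : ℝ, HasDerivAt q (2*(a+b*t)*b + lamt*(2*(t/a)*(1/a))) t := by
    intro t
    have hlin : HasDerivAt (fun t : ℝ => a + b*t) b t := by
      simpa using ((hasDerivAt_id t).const_mul b).const_add a
    have h1 : HasDerivAt (fun t : ℝ => (a + b*t)^2) (2*(a+b*t)*b) t := by
      simpa using hlin.fun_pow 2
    have hdiv : HasDerivAt (fun t : ℝ => t/a) (1/a) t := by
      simpa [div_eq_mul_inv] using (hasDerivAt_id t).mul_const a⁻¹
    have h2 : HasDerivAt (fun t : ℝ => lamt * (t/a)^2) (lamt * (2*(t/a)*(1/a))) t := by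
      simpa [mul_assoc] using (hdiv.pow 2).const_mul lamt
    simpa using h1.fun_add h2
  -- derivative of f where q > 0
  have hfd : ∀ t : ℝ, 0 < q t →
      HasDerivAt f ((2*(a+b*t)*b + lamt*(2*(t/a)*(1/a))) / (2 * Real.sqrt (q t))) t := by
    intro t ht
    rw [hfe]
    have := (Real.hasDerivAt_sqrt ht.ne').comp t (hqd t)
    simpa [div_eq_mul_inv, mul_comm, mul_assoc, Function.comp_def] using this
  have hpos0 : 0 < q 0 := by
    simp only [hq]
    have : (a + b * 0) ^ 2 + lamt * (0 / a) ^ 2 = a ^ 2 := by ring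
    rw [this]; positivity
  refine ⟨hpos0, ?_, ?_, ?_⟩
  · intro t ht
    set U : Set ℝ := {x | 0 < q x} with hU
    have hUopen : IsOpen U := by
      have hcont : Continuous q := by fun_prop
      exact isOpen_lt continuous_const hcont
    have htU : t ∈ U := ht
    -- deriv f equals g on U
    set g : ℝ → ℝ := fun x => (2*(a+b*x)*b + lamt*(2*(x/a)*(1/a))) / (2 * Real.sqrt (q x)) with hg
    have hev : deriv f =ᶠ[nhds t] g := by
      filter_upwards [hUopen.mem_nhds htU] with x hx
      exact (hfd x hx).deriv
    rw [hev.deriv_eq]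
    -- compute deriv g at t
    have hs : Real.sqrt (q t) ^ 2 = q t := Real.sq_sqrt ht.le
    have hs0 : 0 < Real.sqrt (q t) := Real.sqrt_pos.mpr ht
    have hN : HasDerivAt (fun x : ℝ => 2*(a+b*x)*b + lamt*(2*(x/a)*(1/a)))
        (2*b*b + lamt*(2*(1/a)*(1/a))) t := by
      have h1 : HasDerivAt (fun x : ℝ => 2*(a+b*x)*b) (2*b*b) t := by
        have hlin : HasDerivAt (fun x : ℝ => a + b*x) b t := by
          simpa using ((hasDerivAt_id t).const_mul b).const_add a
        simpa [mul_comm, mul_assoc] using (hlin.const_mul 2).mul_const b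
      have h2 : HasDerivAt (fun x : ℝ => lamt*(2*(x/a)*(1/a))) (lamt*(2*(1/a)*(1/a))) t := by
        have hdiv : HasDerivAt (fun x : ℝ => x/a) (1/a) t := by
          simpa [div_eq_mul_inv] using (hasDerivAt_id t).mul_const a⁻¹
        simpa [mul_comm, mul_assoc] using (((hdiv.const_mul 2).mul_const (1/a)).const_mul lamt)
      exact h1.add h2
    have hD : HasDerivAt (fun x : ℝ => 2 * Real.sqrt (q x))
        (2 * ((2*(a+b*t)*b + lamt*(2*(t/a)*(1/a))) / (2 * Real.sqrt (q t)))) t := by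
      have := (Real.hasDerivAt_sqrt ht.ne').comp t (hqd t)
      exact (by rw [← hfe]; exact hfd t ht :
        HasDerivAt (fun x : ℝ => Real.sqrt (q x))
          ((2*(a+b*t)*b + lamt*(2*(t/a)*(1/a))) / (2 * Real.sqrt (q t))) t).const_mul 2
    have hD0 : (2 : ℝ) * Real.sqrt (q t) ≠ 0 := by positivity
    have hgd := hN.fun_div hD hD0
    rw [hgd.deriv, hfe]
    simp only [hq] at hs ⊢
    set s := Real.sqrt ((a + b * t) ^ 2 + lamt * (t / a) ^ 2) with hsdef
    have hs' : s^2 * a^2 = (a+b*t)^2 * a^2 + lamt * t^2 := by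
      rw [hs]; field_simp
    field_simp
    linear_combination (b^2*a^2 + lamt) * hs'
  · rw [hf 0]
    have : (a + b * 0) ^ 2 + lamt * (0 / a) ^ 2 = a ^ 2 := by ring
    rw [this, Real.sqrt_sq ha.le]
  · have := (hfd 0 hpos0).deriv
    rw [this]
    have h1 : q 0 = a ^ 2 := by simp [hq]
    rw [h1, Real.sqrt_sq ha.le]
    field_simp
    ring
end

section
/- For constants a > 0, b ∈ ℝ, λ̃ ∈ ℝ, and C := (−a² + λ̃/a² + b²)/2, the function f(t) := √((a² + C)·cosh(2t) + a·b·sinh(2t) − C), on the maximal interval around 0 where the radicand is positive, satisfies f''(t) − f(t) = λ̃ / f(t)³, f(0) = a, f'(0) = b. -/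
open Real

/-- Explicit solution of f'' − f = λ̃/f³ with f(0)=a, f'(0)=b (case λ = −1):
the ODE holds at every point where the radicand is positive. -/
theorem stmt_14 (a b lamt : ℝ) (ha : 0 < a) (C : ℝ)
    (hC : C = (-a ^ 2 + lamt / a ^ 2 + b ^ 2) / 2) (f : ℝ → ℝ)
    (hf : ∀ t, f t = Real.sqrt ((a ^ 2 + C) * Real.cosh (2 * t) + a * b * Real.sinh (2 * t) - C)) :
    (0 < (a ^ 2 + C) * Real.cosh (2 * 0) + a * b * Real.sinh (2 * 0) - C) ∧
    (∀ t : ℝ, 0 < (a ^ 2 + C) * Real.cosh (2 * t) + a * b * Real.sinh (2 * t) - C →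
      deriv (deriv f) t - f t = lamt / f t ^ 3) ∧
    f 0 = a ∧ deriv f 0 = b := by
  have ha0 : a ≠ 0 := ha.ne'
  set g : ℝ → ℝ := fun t => (a ^ 2 + C) * Real.cosh (2 * t) + a * b * Real.sinh (2 * t) - C with hgdef
  set g1 : ℝ → ℝ := fun t => 2 * (a ^ 2 + C) * Real.sinh (2 * t) + 2 * (a * b) * Real.cosh (2 * t) with hg1def
  set g2 : ℝ → ℝ := fun t => 4 * (a ^ 2 + C) * Real.cosh (2 * t) + 4 * (a * b) * Real.sinh (2 * t) with hg2def
  have h2t : ∀ t : ℝ, HasDerivAt (fun s : ℝ => 2 * s) 2 t := fun t => by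
    simpa using (hasDerivAt_id t).const_mul 2
  have hgd : ∀ t, HasDerivAt g (g1 t) t := by
    intro t
    have hc := ((Real.hasDerivAt_cosh (2 * t)).comp t (h2t t)).const_mul (a ^ 2 + C)
    have hs := ((Real.hasDerivAt_sinh (2 * t)).comp t (h2t t)).const_mul (a * b)
    have h := (hc.add hs).sub_const C
    refine HasDerivAt.congr_deriv (f := g) h ?_
    simp only [hg1def]; ring
  have hg1d : ∀ t, HasDerivAt g1 (g2 t) t := by
    intro t
    have hs := ((Real.hasDerivAt_sinh (2 * t)).comp t (h2t t)).const_mul (2 * (a ^ 2 + C))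
    have hc := ((Real.hasDerivAt_cosh (2 * t)).comp t (h2t t)).const_mul (2 * (a * b))
    refine HasDerivAt.congr_deriv (f := g1) (hs.add hc) ?_
    simp only [hg2def]; ring
  have hfeq : f = fun t => Real.sqrt (g t) := funext hf
  have hfd : ∀ s, 0 < g s → HasDerivAt f (g1 s / (2 * Real.sqrt (g s))) s := by
    intro s hs
    rw [hfeq]
    exact (hgd s).sqrt hs.ne'
  have g0 : g 0 = a ^ 2 := by simp [hgdef]
  have hkey : ∀ t, 2 * g2 t * g t - g1 t ^ 2 - 4 * g t ^ 2 = 4 * lamt := by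
    intro t
    have hA : (a ^ 2 + C) ^ 2 - C ^ 2 = lamt + (a * b) ^ 2 := by
      subst hC; field_simp; ring
    have hch := Real.cosh_sq_sub_sinh_sq (2 * t)
    simp only [hgdef, hg1def, hg2def]
    linear_combination (4 * ((a ^ 2 + C) ^ 2 - (a * b) ^ 2)) * hch + 4 * hA
  refine ⟨?_, ?_, ?_, ?_⟩
  · show 0 < g 0
    rw [g0]; positivity
  · intro t ht
    change 0 < g t at ht
    have hcont : Continuous g := continuous_iff_continuousAt.mpr fun u => (hgd u).continuousAt
    have hopen : IsOpen {s | 0 < g s} := isOpen_lt continuous_const hcont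
    have hmem : {s | 0 < g s} ∈ nhds t := hopen.mem_nhds ht
    set φ : ℝ → ℝ := fun s => g1 s / (2 * Real.sqrt (g s)) with hφdef
    have hEq : deriv f =ᶠ[nhds t] φ := by
      filter_upwards [hmem] with u hu
      exact (hfd u hu).deriv
    have hsq : HasDerivAt (fun u => 2 * Real.sqrt (g u)) (2 * (g1 t / (2 * Real.sqrt (g t)))) t :=
      ((hgd t).sqrt ht.ne').const_mul 2
    have hsqrt_pos : 0 < Real.sqrt (g t) := Real.sqrt_pos.mpr ht
    have hden : 2 * Real.sqrt (g t) ≠ 0 := by positivity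
    have hφd : HasDerivAt φ ((g2 t * (2 * Real.sqrt (g t)) - g1 t * (2 * (g1 t / (2 * Real.sqrt (g t))))) / (2 * Real.sqrt (g t)) ^ 2) t :=
      (hg1d t).div hsq hden
    have h2 : deriv (deriv f) t = (g2 t * (2 * Real.sqrt (g t)) - g1 t * (2 * (g1 t / (2 * Real.sqrt (g t))))) / (2 * Real.sqrt (g t)) ^ 2 := by
      rw [hEq.deriv_eq]
      exact hφd.deriv
    have hft : f t = Real.sqrt (g t) := hf t
    have hsq2 : Real.sqrt (g t) ^ 2 = g t := Real.sq_sqrt ht.le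
    rw [h2, hft]
    have hk := hkey t
    set s := Real.sqrt (g t) with hsdef
    have hs0 : s ≠ 0 := hsqrt_pos.ne'
    calc (g2 t * (2 * s) - g1 t * (2 * (g1 t / (2 * s)))) / (2 * s) ^ 2 - s
        = (2 * g2 t * s ^ 2 - g1 t ^ 2 - 4 * (s ^ 2) ^ 2) / (4 * s ^ 3) := by field_simp; ring
      _ = lamt / s ^ 3 := by
        rw [hsq2, hk, mul_div_mul_left _ _ (by norm_num : (4:ℝ) ≠ 0)]
  · rw [hf 0]
    norm_num
    exact Real.sqrt_sq ha.le
  · have h0 : 0 < g 0 := by rw [g0]; positivity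
    rw [(hfd 0 h0).deriv]
    rw [g0]
    simp only [hg1def]
    norm_num
    rw [Real.sqrt_sq ha.le]
    field_simp
end

section
/- For a > 0 and b ∈ ℝ, let C := (−a² + 1/a² + b²)/2 and f(t) := √((a²+C)cosh(2t) + ab·sinh(2t) − C). Then C² + 1 > C², a² + C = √(C² + 1 + (ab)²) ≥ √(C²+1) > |C|, f is defined and positive on all of ℝ, and ∫_{−∞}^{∞} 1/f(t)² dt < ∞. -/
open Real MeasureTheory

set_option maxHeartbeats 1600000 in
/-- Case λ = −1, λ̃ = 1: f is positive on all of ℝ and 1/f² has finite integral. -/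
theorem stmt_15 (a b : ℝ) (ha : 0 < a) (C : ℝ)
    (hC : C = (-a ^ 2 + 1 / a ^ 2 + b ^ 2) / 2) (f : ℝ → ℝ)
    (hf : ∀ t, f t = Real.sqrt ((a ^ 2 + C) * Real.cosh (2 * t) + a * b * Real.sinh (2 * t) - C)) :
    C ^ 2 + 1 > C ^ 2 ∧
    a ^ 2 + C = Real.sqrt (C ^ 2 + 1 + (a * b) ^ 2) ∧
    a ^ 2 + C ≥ Real.sqrt (C ^ 2 + 1) ∧
    Real.sqrt (C ^ 2 + 1) > |C| ∧
    (∀ t : ℝ, 0 < (a ^ 2 + C) * Real.cosh (2 * t) + a * b * Real.sinh (2 * t) - C) ∧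
    (∫⁻ t : ℝ, ENNReal.ofReal (1 / f t ^ 2)) < ⊤ := by
  have ha0 : a ≠ 0 := ha.ne'
  have ha2 : 0 < a ^ 2 := by positivity
  have hinv : 0 < 1 / a ^ 2 := by positivity
  have hb2 : 0 ≤ b ^ 2 := sq_nonneg b
  have hApos : 0 < a ^ 2 + C := by rw [hC]; nlinarith
  have hkey : (a ^ 2 + C) ^ 2 = C ^ 2 + 1 + (a * b) ^ 2 := by
    rw [hC]; field_simp; ring
  have hA1 : 1 ≤ a ^ 2 + C := by nlinarith [sq_nonneg (a * b)]
  set A := a ^ 2 + C with hAdef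
  set B := a * b with hBdef
  have hD2' : 0 ≤ A ^ 2 - 1 := by nlinarith [sq_nonneg B]
  set D := Real.sqrt (A ^ 2 - 1) with hDdef
  have hDnn : 0 ≤ D := Real.sqrt_nonneg _
  have hD2 : D ^ 2 = C ^ 2 + B ^ 2 := by
    rw [hDdef, Real.sq_sqrt hD2']; linarith
  have hDltA : D < A := by
    rw [hDdef]; exact (Real.sqrt_lt' hApos).mpr (by nlinarith)
  set ε := A - D with hεdef
  have hεpos : 0 < ε := by simp only [hεdef]; linarith
  have hDB1 : 0 ≤ D + B := by nlinarith [sq_nonneg C, mul_nonneg hDnn hDnn]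
  have hDB2 : 0 ≤ D - B := by nlinarith [sq_nonneg C, mul_nonneg hDnn hDnn]
  -- Key pointwise lower bound
  have hlow : ∀ x : ℝ, ε * Real.cosh x ≤ A * Real.cosh x + B * Real.sinh x - C := by
    intro x
    have hp : 0 < Real.exp x := Real.exp_pos x
    have hq : 0 < Real.exp (-x) := Real.exp_pos _
    have hpq : Real.exp x * Real.exp (-x) = 1 := by
      rw [← Real.exp_add]; simp
    have huv : ((D + B) * Real.exp x) * ((D - B) * Real.exp (-x)) = C ^ 2 := by
      have h1 : ((D + B) * Real.exp x) * ((D - B) * Real.exp (-x))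
          = (D ^ 2 - B ^ 2) * (Real.exp x * Real.exp (-x)) := by ring
      rw [h1, hpq, hD2]; ring
    have hu : 0 ≤ (D + B) * Real.exp x := mul_nonneg hDB1 hp.le
    have hv : 0 ≤ (D - B) * Real.exp (-x) := mul_nonneg hDB2 hq.le
    have key : 2 * C ≤ (D + B) * Real.exp x + (D - B) * Real.exp (-x) := by
      nlinarith [sq_nonneg ((D + B) * Real.exp x - (D - B) * Real.exp (-x)), hu, hv, huv]
    rw [Real.cosh_eq, Real.sinh_eq, hεdef]
    linarith [key]
  have hpos : ∀ t : ℝ, 0 < A * Real.cosh (2 * t) + B * Real.sinh (2 * t) - C := by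
    intro t
    have h3 : 0 < ε * Real.cosh (2 * t) := mul_pos hεpos (Real.cosh_pos _)
    linarith [hlow (2 * t)]
  refine ⟨by linarith, ?_, ?_, ?_, hpos, ?_⟩
  · rw [← hkey, Real.sqrt_sq hApos.le]
  · have h1 : Real.sqrt (C ^ 2 + 1) ≤ Real.sqrt (C ^ 2 + 1 + B ^ 2) :=
      Real.sqrt_le_sqrt (by nlinarith [sq_nonneg B])
    rw [ge_iff_le, ← Real.sqrt_sq hApos.le, hkey]
    exact h1
  · have h1 : |C| = Real.sqrt (C ^ 2) := (Real.sqrt_sq_eq_abs C).symm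
    rw [h1]
    exact Real.sqrt_lt_sqrt (sq_nonneg C) (by linarith)
  · -- the integral
    have hbound : ∀ t : ℝ, 1 / f t ^ 2 ≤ (2 / ε) * Real.exp (-2 * |t|) := by
      intro t
      have hft : f t ^ 2 = A * Real.cosh (2 * t) + B * Real.sinh (2 * t) - C := by
        rw [hf t, Real.sq_sqrt (hpos t).le]
      have hcosh : Real.exp (2 * |t|) / 2 ≤ Real.cosh (2 * t) := by
        rw [Real.cosh_eq]
        rcases le_total 0 t with h | h
        · rw [abs_of_nonneg h]; have := Real.exp_pos (-(2 * t)); linarith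
        · rw [abs_of_nonpos h]
          have := Real.exp_pos (2 * t)
          have h2 : Real.exp (2 * -t) = Real.exp (-(2 * t)) := by ring_nf
          rw [h2]; linarith
      have hexp2 : 0 < Real.exp (2 * |t|) := Real.exp_pos _
      have hlb : ε * Real.exp (2 * |t|) / 2 ≤ f t ^ 2 := by
        have := hlow (2 * t)
        have h3 : ε * (Real.exp (2 * |t|) / 2) ≤ ε * Real.cosh (2 * t) :=
          mul_le_mul_of_nonneg_left hcosh hεpos.le
        rw [hft]; nlinarith
      have hfpos : 0 < f t ^ 2 := by rw [hft]; exact hpos t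
      have h4 : 1 / f t ^ 2 ≤ 1 / (ε * Real.exp (2 * |t|) / 2) :=
        one_div_le_one_div_of_le (by positivity) hlb
      have h5 : 1 / (ε * Real.exp (2 * |t|) / 2) = (2 / ε) * Real.exp (-2 * |t|) := by
        rw [show (-2 : ℝ) * |t| = -(2 * |t|) by ring, Real.exp_neg]
        field_simp
      linarith [h4, h5.le, h5.ge]
    have hexpint : Integrable (fun t : ℝ => Real.exp (-2 * |t|)) := by
      have h1 : IntegrableOn (fun t : ℝ => Real.exp (-2 * |t|)) (Set.Ioi 0) := by
        apply (exp_neg_integrableOn_Ioi 0 two_pos).congr_fun ?_ measurableSet_Ioi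
        intro x hx
        show Real.exp (-2 * x) = Real.exp (-2 * |x|)
        rw [abs_of_pos hx]
      have h2 : IntegrableOn (fun t : ℝ => Real.exp (-2 * |t|)) (Set.Iic 0) := by
        rw [IntegrableOn, ← Measure.map_neg_eq_self (volume : Measure ℝ)]
        have m : MeasurableEmbedding fun x : ℝ => -x :=
          (Homeomorph.neg ℝ).measurableEmbedding
        rw [m.restrict_map, m.integrable_map_iff]
        simp_rw [Function.comp_def, abs_neg, Set.neg_preimage, Set.neg_Iic, neg_zero]
        exact Iff.mpr integrableOn_Ici_iff_integrableOn_Ioi h1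
      rw [← integrableOn_univ, ← Set.Iic_union_Ioi (a := (0 : ℝ))]
      exact h2.union h1
    have hg : Integrable (fun t : ℝ => (2 / ε) * Real.exp (-2 * |t|)) :=
      hexpint.const_mul _
    have hmono : (∫⁻ t : ℝ, ENNReal.ofReal (1 / f t ^ 2))
        ≤ ∫⁻ t : ℝ, ‖(2 / ε) * Real.exp (-2 * |t|)‖₊ := by
      apply lintegral_mono
      intro t
      have hgt : (0 : ℝ) ≤ (2 / ε) * Real.exp (-2 * |t|) := by positivity
      dsimp only
      rw [← enorm_eq_nnnorm, Real.enorm_eq_ofReal hgt]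
      exact ENNReal.ofReal_le_ofReal (hbound t)
    exact lt_of_le_of_lt hmono hg.2
end

section
/- Let f : ℝ → ℝ be positive and twice differentiable on all of ℝ with f''(t) − f(t) = −1/f(t)³ for all t, and suppose ∫_{−∞}^{0} 1/f(t)² dt = ∞ and ∫_{0}^{∞} 1/f(t)² dt = ∞. Then f(t) = 1 for all t. -/
open Real MeasureTheory Set

/-- If `g` grows at least like `A·exp(2t)` for `t ≥ 0` (with `A > 0`), then `1/g` has
finite tail integral on `Ioi 0`. -/
lemma tail_ne_top_aux {g : ℝ → ℝ} (hg : Continuous g) (hgpos : ∀ t, 0 < g t)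
    {A C : ℝ} (hA : 0 < A)
    (hb : ∀ t, 0 ≤ t → A * Real.exp (2 * t) - C ≤ g t) :
    (∫⁻ t in Ioi (0:ℝ), ENNReal.ofReal (1 / g t)) ≠ ⊤ := by
  set T : ℝ := max 1 (C / A) with hTdef
  have hT1 : (1:ℝ) ≤ T := le_max_left _ _
  have hT0 : (0:ℝ) < T := lt_of_lt_of_le one_pos hT1
  have key : ∀ t, T ≤ t → A / 2 * Real.exp (2 * t) ≤ g t := by
    intro t ht
    have h0t : (0:ℝ) ≤ t := le_trans hT0.le ht
    have hCt : C ≤ A * t := by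
      have h1 : C / A ≤ t := le_trans (le_max_right _ _) ht
      rw [div_le_iff₀ hA] at h1; linarith [h1]
    have hexp : 2 * t ≤ Real.exp (2 * t) := by
      have := Real.add_one_le_exp (2 * t); linarith
    have hbb := hb t h0t
    nlinarith [Real.exp_pos (2 * t), hA.le]
  have hgcont : Continuous fun t => 1 / g t :=
    continuous_const.div hg fun t => (hgpos t).ne'
  have hI1 : IntegrableOn (fun t => 1 / g t) (Ioc 0 T) := hgcont.integrableOn_Ioc
  have hI2 : IntegrableOn (fun t => 1 / g t) (Ioi T) := by
    have hmaj : IntegrableOn (fun t => 2 / A * Real.exp (-2 * t)) (Ioi T) :=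
      (exp_neg_integrableOn_Ioi T (by norm_num : (0:ℝ) < 2)).const_mul _
    refine hmaj.mono' hgcont.aestronglyMeasurable.restrict ?_
    filter_upwards [ae_restrict_mem measurableSet_Ioi] with t ht
    have hgt := key t (le_of_lt ht)
    have hgpos' := hgpos t
    have e2 := Real.exp_pos (2 * t)
    have hEq : 2 / A * Real.exp (-2 * t) = 1 / (A / 2 * Real.exp (2 * t)) := by
      rw [show (-2:ℝ) * t = -(2 * t) by ring, Real.exp_neg]
      field_simp
    rw [Real.norm_eq_abs, abs_of_pos (by positivity), hEq]
    exact one_div_le_one_div_of_le (by positivity) hgt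
  have hsplit : Ioi (0:ℝ) = Ioc 0 T ∪ Ioi T := (Ioc_union_Ioi_eq_Ioi hT0.le).symm
  rw [hsplit]
  exact ne_of_lt (hI1.union hI2).setLIntegral_lt_top

/-- The same on the negative side: growth like `B·exp(-2t)` for `t ≤ 0`. -/
lemma tail_ne_top_aux' {g : ℝ → ℝ} (hg : Continuous g) (hgpos : ∀ t, 0 < g t)
    {B C : ℝ} (hB : 0 < B)
    (hb : ∀ t, t ≤ 0 → B * Real.exp (-(2 * t)) - C ≤ g t) :
    (∫⁻ t in Iio (0:ℝ), ENNReal.ofReal (1 / g t)) ≠ ⊤ := by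
  have hmp : MeasurePreserving (fun x : ℝ => -x) volume volume :=
    Measure.measurePreserving_neg _
  have hmap := hmp.setLIntegral_comp_emb measurableEmbedding_neg
    (fun t => ENNReal.ofReal (1 / g t)) (Ioi (0:ℝ))
  have himg : (fun x : ℝ => -x) '' Ioi (0:ℝ) = Iio (0:ℝ) := by
    simpa using Set.image_neg_Ioi (a := (0:ℝ))
  rw [himg] at hmap
  rw [← hmap]
  exact tail_ne_top_aux (hg.comp continuous_neg) (fun t => hgpos (-t)) hB
    (fun t ht => by simpa using hb (-t) (by linarith))

set_option maxHeartbeats 1600000 in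
/-- Projective rigidity (Theorem 1.3(i)): a positive global solution of
f'' − f = −1/f³ with both tail integrals of 1/f² divergent is f ≡ 1. -/
theorem stmt_16 (f : ℝ → ℝ) (hf : Differentiable ℝ f) (hf' : Differentiable ℝ (deriv f))
    (hpos : ∀ t, 0 < f t)
    (hode : ∀ t, deriv (deriv f) t - f t = -1 / f t ^ 3)
    (hneg : (∫⁻ t in Iio (0:ℝ), ENNReal.ofReal (1 / f t ^ 2)) = ⊤)
    (hposint : (∫⁻ t in Ioi (0:ℝ), ENNReal.ofReal (1 / f t ^ 2)) = ⊤) :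
    ∀ t, f t = 1 := by
  have hfne : ∀ t, f t ≠ 0 := fun t => (hpos t).ne'
  -- derivatives as HasDerivAt
  have hfd : ∀ t, HasDerivAt f (deriv f t) t := fun t => (hf t).hasDerivAt
  have hfd' : ∀ t, HasDerivAt (deriv f) (deriv (deriv f) t) t := fun t => (hf' t).hasDerivAt
  -- Energy function E(t) = f'^2 - f^2 - 1/f^2, constant
  set Efun : ℝ → ℝ := fun t => (deriv f t) ^ 2 - f t ^ 2 - 1 / f t ^ 2 with hEdef
  have hEderiv : ∀ t, HasDerivAt Efun 0 t := by
    intro t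
    have h1 : HasDerivAt (fun t => (deriv f t) ^ 2) (2 * deriv f t * deriv (deriv f) t) t := by
      simpa using (hfd' t).fun_pow 2
    have h2 : HasDerivAt (fun t => f t ^ 2) (2 * f t * deriv f t) t := by
      simpa using (hfd t).fun_pow 2
    have h3 : HasDerivAt (fun t => 1 / f t ^ 2)
        (-(2 * f t * deriv f t) / (f t ^ 2) ^ 2) t := by
      simpa [one_div] using (h2.fun_inv (pow_ne_zero 2 (hfne t)))
    have := (h1.fun_sub h2).fun_sub h3
    convert this using 1
    · rfl
    · rfl
    have hfpp : deriv (deriv f) t = f t - 1 / f t ^ 3 := by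
      have hODE := hode t
      rw [neg_div] at hODE
      linarith
    have hft := hfne t
    rw [hfpp]
    field_simp
    ring
  have hEconst : ∀ t, Efun t = Efun 0 := by
    intro t
    exact is_const_of_deriv_eq_zero (fun s => (hEderiv s).differentiableAt)
      (fun s => (hEderiv s).deriv) t 0
  set E : ℝ := Efun 0 with hE0
  -- g = f^2 satisfies g'' = 4g + 2E
  set g : ℝ → ℝ := fun t => f t ^ 2 with hgdef
  have hgd : ∀ t, HasDerivAt g (2 * f t * deriv f t) t := by
    intro t; simpa using (hfd t).fun_pow 2
  have hgd' : ∀ t, HasDerivAt (fun t => 2 * f t * deriv f t) (4 * g t + 2 * E) t := by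
    intro t
    have h1 : HasDerivAt (fun t => 2 * f t * deriv f t)
        (2 * deriv f t * deriv f t + 2 * f t * deriv (deriv f) t) t := by
      have := ((hfd t).const_mul 2).fun_mul (hfd' t)
      simpa [mul_comm, mul_left_comm, mul_assoc] using this
    convert h1 using 1
    have hfpp : deriv (deriv f) t = f t - 1 / f t ^ 3 := by
      have hODE := hode t
      rw [neg_div] at hODE
      linarith
    have hEc : deriv f t ^ 2 - f t ^ 2 - 1 / f t ^ 2 = E := hEconst t
    have hft := hfne t
    rw [hfpp]
    show 4 * f t ^ 2 + 2 * E = _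
    rw [← hEc]
    field_simp
    ring
  -- solve the linear ODE for g
  set A : ℝ := (g 0 + E / 2) / 2 + (2 * f 0 * deriv f 0) / 4 with hAdef
  set B : ℝ := (g 0 + E / 2) / 2 - (2 * f 0 * deriv f 0) / 4 with hBdef
  have hgsol : ∀ t, g t = A * Real.exp (2 * t) + B * Real.exp (-(2 * t)) - E / 2 := by
    -- h := g - (A e^{2t} + B e^{-2t} - E/2) satisfies h''=4h, h(0)=h'(0)=0
    set h : ℝ → ℝ := fun t => g t - A * Real.exp (2 * t) - B * Real.exp (-(2 * t)) + E / 2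
      with hhdef
    set h' : ℝ → ℝ := fun t =>
      2 * f t * deriv f t - 2 * A * Real.exp (2 * t) + 2 * B * Real.exp (-(2 * t)) with hh'def
    have hexp1 : ∀ t : ℝ, HasDerivAt (fun t : ℝ => Real.exp (2 * t)) (2 * Real.exp (2 * t)) t := by
      intro t
      simpa [mul_comm] using (HasDerivAt.exp ((hasDerivAt_id t).const_mul 2))
    have hexp2 : ∀ t : ℝ, HasDerivAt (fun t : ℝ => Real.exp (-(2 * t)))
        (-2 * Real.exp (-(2 * t))) t := by
      intro t
      have := (HasDerivAt.exp (((hasDerivAt_id t).const_mul 2).neg))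
      simpa [mul_comm] using this
    have hhd : ∀ t, HasDerivAt h (h' t) t := by
      intro t
      have := (((hgd t).fun_sub ((hexp1 t).const_mul A)).fun_sub ((hexp2 t).const_mul B)).add_const (E / 2)
      convert this using 1
      · rfl
      · rfl
      simp only [hh'def]; ring
    have hhd' : ∀ t, HasDerivAt h' (4 * h t) t := by
      intro t
      have := ((hgd' t).fun_sub ((hexp1 t).const_mul (2 * A))).fun_add ((hexp2 t).const_mul (2 * B))
      convert this using 1
      · rfl
      · rfl
      simp only [hhdef]; ring
    have hh0 : h 0 = 0 := by
      simp only [hhdef, hAdef, hBdef]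
      simp [Real.exp_zero]
      ring
    have hh'0 : h' 0 = 0 := by
      simp only [hh'def, hAdef, hBdef]
      simp [Real.exp_zero]
      ring
    -- u = (h' + 2h) e^{-2t} is constant 0
    set u : ℝ → ℝ := fun t => (h' t + 2 * h t) * Real.exp (-(2 * t)) with hudef
    have hud : ∀ t, HasDerivAt u 0 t := by
      intro t
      have := (((hhd' t).fun_add ((hhd t).const_mul 2)).fun_mul (hexp2 t))
      convert this using 1
      · rfl
      · rfl
      ring
    have huconst : ∀ t, u t = 0 := by
      intro t
      have := is_const_of_deriv_eq_zero (fun s => (hud s).differentiableAt)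
        (fun s => (hud s).deriv) t 0
      rw [this]
      simp [hudef, hh0, hh'0]
    have hrel : ∀ t, h' t = -2 * h t := by
      intro t
      have := huconst t
      have he := Real.exp_ne_zero (-(2 * t))
      rw [hudef] at this
      simp only at this
      rcases mul_eq_zero.mp this with h1 | h2
      · linarith
      · exact absurd h2 he
    -- v = h e^{2t} is constant 0
    set v : ℝ → ℝ := fun t => h t * Real.exp (2 * t) with hvdef
    have hvd : ∀ t, HasDerivAt v 0 t := by
      intro t
      have := (hhd t).fun_mul (hexp1 t)
      convert this using 1
      · rfl
      · rfl
      rw [hrel t]; ring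
    have hvconst : ∀ t, v t = 0 := by
      intro t
      have := is_const_of_deriv_eq_zero (fun s => (hvd s).differentiableAt)
        (fun s => (hvd s).deriv) t 0
      rw [this]
      simp [hvdef, hh0]
    intro t
    have := hvconst t
    rw [hvdef] at this
    simp only at this
    rcases mul_eq_zero.mp this with h1 | h2
    · simp only [hhdef] at h1; linarith
    · exact absurd h2 (Real.exp_ne_zero _)
  -- g is continuous and positive
  have hgcont : Continuous g := by
    simpa [hgdef] using (hf.continuous.fun_pow 2)
  have hgpos : ∀ t, 0 < g t := fun t => by
    simpa [hgdef] using pow_pos (hpos t) 2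
  have hone : ∀ t, (1 : ℝ) / f t ^ 2 = 1 / g t := fun t => rfl
  clear_value Efun E A B
  -- A = 0
  have hAzero : A = 0 := by
    rcases lt_trichotomy A 0 with hA | hA | hA
    · -- g becomes negative for large t
      exfalso
      set t0 : ℝ := max 0 ((|B| + |E| / 2 + 1) / (-A)) with ht0
      have h1 : (|B| + |E| / 2 + 1) / (-A) ≤ t0 := le_max_right _ _
      have h2 : (0:ℝ) ≤ t0 := le_max_left _ _
      have hexp : (|B| + |E| / 2 + 1) / (-A) ≤ Real.exp (2 * t0) := by
        have := Real.add_one_le_exp (2 * t0)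
        nlinarith [h1, h2]
      have hAe : A * Real.exp (2 * t0) ≤ -(|B| + |E| / 2 + 1) := by
        have hA' : (0:ℝ) < -A := by linarith
        rw [div_le_iff₀ hA'] at hexp
        nlinarith
      have hg0 := hgsol t0
      have hBe : B * Real.exp (-(2 * t0)) ≤ |B| := by
        have h3 : Real.exp (-(2 * t0)) ≤ 1 := by
          apply Real.exp_le_one_iff.mpr; linarith
        have hs : (0:ℝ) ≤ |B| - B := by linarith [le_abs_self B]
        nlinarith [mul_nonneg hs (Real.exp_pos (-(2 * t0))).le,
          mul_nonneg (abs_nonneg B) (by linarith : (0:ℝ) ≤ 1 - Real.exp (-(2 * t0)))]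
      have hfin : g t0 ≤ -1 := by
        rw [hg0]
        have := neg_abs_le E
        linarith [hAe, hBe]
      linarith [hgpos t0]
    · exact hA
    · exfalso
      have hbound : ∀ t, 0 ≤ t → A * Real.exp (2 * t) - (|B| + |E| / 2) ≤ g t := by
        intro t ht
        have hg0 := hgsol t
        have h3 : Real.exp (-(2 * t)) ≤ 1 := by
          apply Real.exp_le_one_iff.mpr; linarith
        have hBe : -|B| ≤ B * Real.exp (-(2 * t)) := by
          have hs : (0:ℝ) ≤ B + |B| := by linarith [neg_abs_le B]
          nlinarith [mul_nonneg hs (Real.exp_pos (-(2 * t))).le,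
            mul_nonneg (abs_nonneg B) (by linarith : (0:ℝ) ≤ 1 - Real.exp (-(2 * t)))]
        have hEabs : -(E / 2) ≥ -(|E| / 2) := by
          have := le_abs_self E; linarith
        rw [hg0]; linarith
      exact (tail_ne_top_aux hgcont hgpos hA hbound) hposint
  have hBzero : B = 0 := by
    rcases lt_trichotomy B 0 with hB | hB | hB
    · exfalso
      set t0 : ℝ := min 0 (-((|A| + |E| / 2 + 1) / (-B))) with ht0
      have h1 : t0 ≤ -((|A| + |E| / 2 + 1) / (-B)) := min_le_right _ _
      have h2 : t0 ≤ 0 := min_le_left _ _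
      have hexp : (|A| + |E| / 2 + 1) / (-B) ≤ Real.exp (-(2 * t0)) := by
        have := Real.add_one_le_exp (-(2 * t0))
        nlinarith [h1, h2]
      have hBe : B * Real.exp (-(2 * t0)) ≤ -(|A| + |E| / 2 + 1) := by
        have hB' : (0:ℝ) < -B := by linarith
        rw [div_le_iff₀ hB'] at hexp
        nlinarith
      have hg0 := hgsol t0
      have hAe : A * Real.exp (2 * t0) = 0 := by rw [hAzero]; ring
      have hfin : g t0 ≤ -1 := by
        rw [hg0, hAe]
        have := neg_abs_le E
        linarith [hBe, abs_nonneg A]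
      linarith [hgpos t0]
    · exact hB
    · exfalso
      have hbound : ∀ t, t ≤ 0 → B * Real.exp (-(2 * t)) - (|A| + |E| / 2) ≤ g t := by
        intro t ht
        have hg0 := hgsol t
        have h3 : Real.exp (2 * t) ≤ 1 := by
          apply Real.exp_le_one_iff.mpr; linarith
        have hAe : -|A| ≤ A * Real.exp (2 * t) := by
          have hs : (0:ℝ) ≤ A + |A| := by linarith [neg_abs_le A]
          nlinarith [mul_nonneg hs (Real.exp_pos (2 * t)).le,
            mul_nonneg (abs_nonneg A) (by linarith : (0:ℝ) ≤ 1 - Real.exp (2 * t))]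
        have hEabs : -(E / 2) ≥ -(|E| / 2) := by
          have := le_abs_self E; linarith
        rw [hg0]; linarith
      exact (tail_ne_top_aux' hgcont hgpos hB hbound) hneg
  -- g is constant, hence f' = 0 and f = 1
  have hgconst : ∀ t, g t = -(E / 2) := by
    intro t
    rw [hgsol t, hAzero, hBzero]; ring
  have hgderiv0 : ∀ t, 2 * f t * deriv f t = 0 := by
    intro t
    have h1 : deriv g t = 2 * f t * deriv f t := (hgd t).deriv
    have h2 : deriv g t = 0 := by
      have : g = fun _ => -(E / 2) := funext hgconst
      rw [this, deriv_const]
    rw [← h1, h2]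
  have hf'0 : ∀ t, deriv f t = 0 := by
    intro t
    have := hgderiv0 t
    have hft := hfne t
    rcases mul_eq_zero.mp this with h1 | h2
    · rcases mul_eq_zero.mp h1 with h3 | h4
      · norm_num at h3
      · exact absurd h4 hft
    · exact h2
  have hf''0 : ∀ t, deriv (deriv f) t = 0 := by
    intro t
    have : deriv f = fun _ => 0 := funext hf'0
    rw [this, deriv_const]
  intro t
  have hODE := hode t
  rw [hf''0 t] at hODE
  have hft := hpos t
  have h3 : f t ^ 3 ≠ 0 := pow_ne_zero _ (hfne t)
  field_simp at hODE
  -- hODE : f t * f t ^3 = 1 (roughly)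
  nlinarith [hODE, hft, sq_nonneg (f t - 1), sq_nonneg (f t + 1), sq_nonneg (f t ^ 2 - 1)]
end
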